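/- Let n, s be nonnegative integers with s ≤ n. Then, as an identity of polynomials in q, ∑_{w ∈ C_{n,s}} q^{maj(w⁻¹)} = [n]_q · [n−1]_q ⋯ [n−s+1]_q (the product having s factors, and being the empty product 1 when s = 0). -/

import Mathlib

open Polynomial

/-- `w` has an increasing subsequence of length `m`. -/
def HasIncSubseq {n : ℕ} (w : Equiv.Perm (Fin n)) (m : ℕ) : Prop :=
  ∃ f : Fin m → Fin n, StrictMono f ∧ StrictMono fun j => w (f j)

/-- The length of the longest increasing subsequence of `w`. -/
noncomputable def isLen {n : ℕ} (w : Equiv.Perm (Fin n)) : ℕ :=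
  sSup {m | HasIncSubseq w m}

/-- The first `n - s` values of `w` are increasing (positions `0,…,n-s-1` in 0-indexing,
i.e. `w(1) < ⋯ < w(n-s)` in 1-indexing). -/
def PrefixInc (n s : ℕ) (w : Equiv.Perm (Fin n)) : Prop :=
  ∀ i j : Fin n, (i : ℕ) < j → (j : ℕ) < n - s → w i < w j

/-- Major index of a permutation: the sum of the (1-indexed) descent positions.
Position `i ∈ {0,…,n-2}` (0-indexed) contributes `i + 1`. -/
def maj {n : ℕ} (σ : Equiv.Perm (Fin n)) : ℕ :=
  ∑ i ∈ Finset.range n,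
    if h : i + 1 < n then
      if σ ⟨i + 1, h⟩ < σ ⟨i, Nat.lt_of_succ_lt h⟩ then i + 1 else 0
    else 0

/-- The q-integer `[m]_q = 1 + q + ⋯ + q^{m-1}` as a polynomial in `q = X` over `ℤ`. -/
noncomputable def qInt (m : ℕ) : Polynomial ℤ :=
  ∑ i ∈ Finset.range m, (X : Polynomial ℤ) ^ i

/-- The set `Π_{n,k}` of permutations whose first `n - k` values are increasing and whose
longest increasing subsequence has length exactly `n - k`, as a `Finset`. -/
noncomputable def PiFinset (n k : ℕ) : Finset (Equiv.Perm (Fin n)) :=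
  @Finset.filter _ (fun w => PrefixInc n k w ∧ isLen w = n - k) (Classical.decPred _)
    Finset.univ

/-- The set `C_{n,s}` of permutations whose first `n - s` values are increasing,
as a `Finset`. -/
noncomputable def CFinset (n s : ℕ) : Finset (Equiv.Perm (Fin n)) :=
  @Finset.filter _ (fun w => PrefixInc n s w) (Classical.decPred _) Finset.univ

/-- The prefix `w(1),…,w(a)` (1-indexed) contains an increasing subsequence of length `m`. -/
def HasIncSubseqPrefix {n : ℕ} (w : Equiv.Perm (Fin n)) (a m : ℕ) : Prop :=
  ∃ f : Fin m → Fin n, StrictMono f ∧ (∀ j, (f j : ℕ) < a) ∧ StrictMono fun j => w (f j)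

/-- Membership in `C_{n,s,a}`: `π ∈ C_{n,s}`, the prefix of length `a` contains an increasing
subsequence of length `n - s + 1`, but the prefix of length `a - 1` does not. -/
def MemCa (n s a : ℕ) (π : Equiv.Perm (Fin n)) : Prop :=
  PrefixInc n s π ∧ HasIncSubseqPrefix π a (n - s + 1) ∧
    ¬ HasIncSubseqPrefix π (a - 1) (n - s + 1)

/-- The set `C_{n,s,a}` as a `Finset`. -/
noncomputable def CaFinset (n s a : ℕ) : Finset (Equiv.Perm (Fin n)) :=
  @Finset.filter _ (fun π => MemCa n s a π) (Classical.decPred _) Finset.univ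


open Finset Equiv
open scoped Classical

namespace CMajQ

variable {n : ℕ}

def IsDes (u : Equiv.Perm (Fin n)) (i : ℕ) : Prop :=
  ∃ h : i + 1 < n, u ⟨i + 1, h⟩ < u ⟨i, Nat.lt_of_succ_lt h⟩

lemma IsDes.lt {u : Equiv.Perm (Fin n)} {i : ℕ} (h : IsDes u i) : i + 1 < n := h.1

noncomputable def T (u : Equiv.Perm (Fin n)) (i : ℕ) : ℕ := if IsDes u i then i + 1 else 0

lemma maj_eq_sum_T (u : Equiv.Perm (Fin n)) : maj u = ∑ i ∈ Finset.range n, T u i := by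
  unfold maj T
  refine Finset.sum_congr rfl fun i _ => ?_
  by_cases h : i + 1 < n
  · rw [dif_pos h]
    by_cases h2 : u ⟨i + 1, h⟩ < u ⟨i, Nat.lt_of_succ_lt h⟩
    · rw [if_pos h2, if_pos ⟨h, h2⟩]
    · rw [if_neg h2, if_neg]
      rintro ⟨h', hl⟩
      exact h2 hl
  · rw [dif_neg h, if_neg]
    rintro ⟨h', _⟩
    exact h h'

noncomputable def ins (u : Equiv.Perm (Fin n)) (p : Fin (n + 1)) : Equiv.Perm (Fin (n + 1)) :=
  (finSuccEquivLast.trans ((Equiv.optionCongr u⁻¹).trans (finSuccEquiv' p).symm))⁻¹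

lemma ins_inv_castSucc (u : Equiv.Perm (Fin n)) (p : Fin (n + 1)) (a : Fin n) :
    (ins u p)⁻¹ (Fin.castSucc a) = p.succAbove (u⁻¹ a) := by
  simp [ins, Equiv.Perm.inv_def, -Equiv.optionCongr_symm]

lemma ins_inv_last (u : Equiv.Perm (Fin n)) (p : Fin (n + 1)) :
    (ins u p)⁻¹ (Fin.last n) = p := by
  simp [ins, Equiv.Perm.inv_def, -Equiv.optionCongr_symm]

lemma ins_apply_self (u : Equiv.Perm (Fin n)) (p : Fin (n + 1)) :
    ins u p p = Fin.last n := by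
  rw [Equiv.apply_eq_iff_eq_symm_apply]
  exact (ins_inv_last u p).symm

lemma ins_apply_succAbove (u : Equiv.Perm (Fin n)) (p : Fin (n + 1)) (k : Fin n) :
    ins u p (p.succAbove k) = Fin.castSucc (u k) := by
  have : p.succAbove k = (ins u p)⁻¹ (Fin.castSucc (u k)) := by
    rw [ins_inv_castSucc]; simp
  rw [this]; exact Equiv.apply_symm_apply _ _

lemma ins_apply_of_lt (u : Equiv.Perm (Fin n)) (p : Fin (n + 1)) (i : ℕ)
    (hip : i < (p : ℕ)) :
    ins u p ⟨i, by omega⟩ = Fin.castSucc (u ⟨i, by have := p.isLt; omega⟩) := by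
  have hin : i < n := by have := p.isLt; omega
  have h : (⟨i, by omega⟩ : Fin (n + 1)) = p.succAbove ⟨i, hin⟩ := by
    rw [Fin.succAbove_of_castSucc_lt p ⟨i, hin⟩ (by simpa [Fin.lt_def] using hip)]
    rfl
  rw [h, ins_apply_succAbove]

lemma ins_apply_of_gt (u : Equiv.Perm (Fin n)) (p : Fin (n + 1)) (i : ℕ)
    (hpi : (p : ℕ) < i) (hin : i < n + 1) :
    ins u p ⟨i, hin⟩ = Fin.castSucc (u ⟨i - 1, by omega⟩) := by
  have h : (⟨i, hin⟩ : Fin (n + 1)) = p.succAbove ⟨i - 1, by omega⟩ := by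
    rw [Fin.succAbove_of_le_castSucc p ⟨i - 1, by omega⟩
      (by simp [Fin.le_def]; omega)]
    simp [Fin.succ_mk]
    omega
  rw [h, ins_apply_succAbove]


-- T-lemmas for v = ins u p
lemma T_ins_lt (u : Equiv.Perm (Fin n)) (p : Fin (n + 1)) (j : ℕ) (h : j + 1 < (p : ℕ)) :
    T (ins u p) j = T u j := by
  have hp := p.isLt
  have hj1n : j + 1 < n := by omega
  unfold T
  have hiff : IsDes (ins u p) j ↔ IsDes u j := by
    constructor
    · rintro ⟨h1, h2⟩
      refine ⟨hj1n, ?_⟩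
      rw [show (⟨j + 1, h1⟩ : Fin (n+1)) = ⟨j+1, by omega⟩ from rfl,
        ins_apply_of_lt u p (j+1) h, ins_apply_of_lt u p j (by omega)] at h2
      rw [Fin.castSucc_lt_castSucc_iff] at h2
      convert h2 using 3
    · rintro ⟨h1, h2⟩
      refine ⟨by omega, ?_⟩
      rw [show (⟨j + 1, by omega⟩ : Fin (n+1)) = ⟨j+1, by omega⟩ from rfl]
      rw [ins_apply_of_lt u p (j+1) h, ins_apply_of_lt u p j (by omega)]
      rw [Fin.castSucc_lt_castSucc_iff]
      convert h2 using 3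
  rw [if_congr hiff rfl rfl]

lemma T_ins_eq (u : Equiv.Perm (Fin n)) (p : Fin (n + 1)) (j : ℕ) (h : j + 1 = (p : ℕ)) :
    T (ins u p) j = 0 := by
  unfold T
  rw [if_neg]
  rintro ⟨h1, h2⟩
  have hpe : (⟨j + 1, h1⟩ : Fin (n+1)) = p := by
    apply Fin.ext; simpa using h
  rw [hpe, ins_apply_self] at h2
  exact absurd h2 (Fin.not_lt.mpr (Fin.le_last _))

lemma T_ins_gt (u : Equiv.Perm (Fin n)) (p : Fin (n + 1)) (j : ℕ) (hpj : (p : ℕ) ≤ j)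
    (hjn : j < n) :
    T (ins u p) (j + 1) = T u j + (if IsDes u j then 1 else 0) := by
  unfold T
  have hiff : IsDes (ins u p) (j + 1) ↔ IsDes u j := by
    constructor
    · rintro ⟨h1, h2⟩
      have hj1n : j + 1 < n := by omega
      refine ⟨hj1n, ?_⟩
      rw [ins_apply_of_gt u p (j+1+1) (by omega) h1,
        ins_apply_of_gt u p (j+1) (by omega) (by omega)] at h2
      simp only [Fin.castSucc_lt_castSucc_iff] at h2
      convert h2 using 3 <;> omega
    · rintro ⟨h1, h2⟩
      refine ⟨by omega, ?_⟩
      rw [ins_apply_of_gt u p (j+1+1) (by omega) (by omega),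
        ins_apply_of_gt u p (j+1) (by omega) (by omega)]
      simp only [Fin.castSucc_lt_castSucc_iff]
      convert h2 using 3 <;> omega
  rw [if_congr hiff rfl rfl]
  split_ifs with h
  · omega
  · omega

lemma T_ins_self (u : Equiv.Perm (Fin n)) (p : Fin (n + 1)) :
    T (ins u p) (p : ℕ) = if (p : ℕ) < n then (p : ℕ) + 1 else 0 := by
  unfold T
  by_cases h : (p : ℕ) < n
  · rw [if_pos h, if_pos]
    refine ⟨by omega, ?_⟩
    rw [show (⟨(p:ℕ), Nat.lt_of_succ_lt (by omega)⟩ : Fin (n+1)) = p from Fin.ext rfl,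
      ins_apply_self, ins_apply_of_gt u p ((p:ℕ)+1) (by omega) (by omega)]
    exact Fin.castSucc_lt_last _
  · rw [if_neg h, if_neg]
    rintro ⟨h1, _⟩
    omega

-- count of descents in [p, q)
noncomputable def dband (u : Equiv.Perm (Fin n)) (p q : ℕ) : ℕ :=
  ∑ j ∈ Finset.Ico p q, if IsDes u j then 1 else 0

noncomputable def dge (u : Equiv.Perm (Fin n)) (p : ℕ) : ℕ := dband u p n

noncomputable def label (u : Equiv.Perm (Fin n)) (p : ℕ) : ℕ :=
  if p = n then 0
  else if 1 ≤ p ∧ IsDes u (p - 1) then 1 + dge u p else p + 1 + dge u p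

lemma dband_split (u : Equiv.Perm (Fin n)) {p q r : ℕ} (h1 : p ≤ q) (h2 : q ≤ r) :
    dband u p r = dband u p q + dband u q r := by
  unfold dband
  rw [Finset.sum_Ico_consecutive _ h1 h2]

lemma dband_le (u : Equiv.Perm (Fin n)) (p q : ℕ) : dband u p q ≤ q - p := by
  unfold dband
  calc ∑ j ∈ Finset.Ico p q, (if IsDes u j then 1 else 0)
      ≤ ∑ _j ∈ Finset.Ico p q, 1 := Finset.sum_le_sum (fun j _ => by split_ifs <;> omega)
    _ = q - p := by simp

lemma dband_single (u : Equiv.Perm (Fin n)) (p : ℕ) :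
    dband u p (p + 1) = if IsDes u p then 1 else 0 := by
  unfold dband
  rw [Nat.Ico_succ_singleton, Finset.sum_singleton]

lemma dband_pos (u : Equiv.Perm (Fin n)) {p q : ℕ} (h1 : p < q) (h2 : IsDes u (q - 1)) :
    1 ≤ dband u p q := by
  obtain ⟨r, rfl⟩ : ∃ r, q = r + 1 := ⟨q - 1, by omega⟩
  simp only [Nat.add_sub_cancel] at h2
  have hthis : dband u p (r+1) = dband u p r + dband u r (r+1) :=
    dband_split u (by omega) (by omega)
  rw [hthis, dband_single, if_pos h2]
  omega

lemma dge_le (u : Equiv.Perm (Fin n)) (p : ℕ) (h : p < n) : dge u p ≤ n - 1 - p := by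
  unfold dge
  obtain ⟨m, rfl⟩ : ∃ m, n = m + 1 := ⟨n - 1, by omega⟩
  have hsplit : dband u p (m+1) = dband u p m + dband u m (m+1) :=
    dband_split u (by omega) (by omega)
  have hlast : dband u m (m+1) = 0 := by
    rw [dband_single, if_neg]
    rintro ⟨h1, _⟩; omega
  have := dband_le u p m
  simp only [Nat.add_sub_cancel]
  omega

lemma dge_zero_eq (u : Equiv.Perm (Fin n)) (p : ℕ) (h : p ≤ n) :
    dge u 0 = dband u 0 p + dge u p := dband_split u (by omega) h


lemma maj_ins (u : Equiv.Perm (Fin n)) (p : Fin (n + 1)) :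
    maj (ins u p) = maj u + label u (p : ℕ) := by
  have hp : (p : ℕ) ≤ n := by have := p.isLt; omega
  rw [maj_eq_sum_T, maj_eq_sum_T]
  have hmem : (p : ℕ) ∈ Finset.range (n + 1) := Finset.mem_range.mpr p.isLt
  -- Step 1: peel off position p and reindex the rest by `range n`.
  have h0 : ∑ i ∈ Finset.range (n + 1), T (ins u p) i
      = T (ins u p) (p : ℕ) + ∑ j ∈ Finset.range n, T (ins u p) (if j < (p : ℕ) then j else j + 1) := by
    rw [← Finset.add_sum_erase _ _ hmem]
    congr 1
    refine (Finset.sum_nbij' (i := fun j => if j < (p : ℕ) then j else j + 1)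
      (j := fun i => if i < (p : ℕ) then i else i - 1) ?_ ?_ ?_ ?_ ?_).symm
    · intro a ha
      simp only [Finset.mem_range] at ha
      simp only [Finset.mem_erase, Finset.mem_range]
      split_ifs with hh <;> omega
    · intro a ha
      simp only [Finset.mem_erase, Finset.mem_range] at ha
      simp only [Finset.mem_range]
      split_ifs with hh <;> omega
    · intro a ha
      simp only [Finset.mem_range] at ha
      split_ifs <;> omega
    · intro a ha
      simp only [Finset.mem_erase, Finset.mem_range] at ha
      split_ifs <;> omega
    · intro a _
      rfl
  -- Step 2: pointwise description of the reindexed terms.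
  have h1 : ∀ j ∈ Finset.range n, T (ins u p) (if j < (p : ℕ) then j else j + 1)
      = (if j + 1 = (p : ℕ) then 0 else T u j)
        + (if (p : ℕ) ≤ j ∧ IsDes u j then 1 else 0) := by
    intro j hj
    have hjn : j < n := Finset.mem_range.mp hj
    rcases lt_trichotomy (j + 1) (p : ℕ) with hc | hc | hc
    · rw [if_pos (by omega), T_ins_lt u p j hc, if_neg (by omega), if_neg (by omega), add_zero]
    · rw [if_pos (by omega), T_ins_eq u p j hc, if_pos hc, if_neg (fun hh => absurd hh.1 (by omega)), add_zero]
    · rw [if_neg (show ¬(j < (p : ℕ)) by omega), T_ins_gt u p j (by omega) hjn,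
        if_neg (show ¬(j + 1 = (p : ℕ)) by omega)]
      by_cases hD : IsDes u j
      · rw [if_pos hD, if_pos ⟨by omega, hD⟩]
      · rw [if_neg hD, if_neg (fun hh => hD hh.2)]
  have h2 : ∑ j ∈ Finset.range n, T (ins u p) (if j < (p : ℕ) then j else j + 1)
      = (∑ j ∈ Finset.range n, if j + 1 = (p : ℕ) then 0 else T u j)
        + ∑ j ∈ Finset.range n, (if (p : ℕ) ≤ j ∧ IsDes u j then 1 else 0) := by
    rw [Finset.sum_congr rfl h1, Finset.sum_add_distrib]
  -- the indicator sum is dge u p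
  have hdge : ∑ j ∈ Finset.range n, (if (p : ℕ) ≤ j ∧ IsDes u j then 1 else 0)
      = dge u (p : ℕ) := by
    unfold dge dband
    rw [Finset.range_eq_Ico, ← Finset.sum_Ico_consecutive _ (Nat.zero_le (p : ℕ)) hp]
    have e1 : ∑ j ∈ Finset.Ico 0 (p : ℕ), (if (p : ℕ) ≤ j ∧ IsDes u j then 1 else 0) = 0 := by
      refine Finset.sum_eq_zero fun j hj => ?_
      rw [Finset.mem_Ico] at hj
      rw [if_neg (by omega)]
    have e2 : ∑ j ∈ Finset.Ico (p : ℕ) n, (if (p : ℕ) ≤ j ∧ IsDes u j then 1 else 0)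
        = ∑ j ∈ Finset.Ico (p : ℕ) n, (if IsDes u j then 1 else 0) := by
      refine Finset.sum_congr rfl fun j hj => ?_
      rw [Finset.mem_Ico] at hj
      by_cases hD : IsDes u j
      · rw [if_pos hD, if_pos ⟨hj.1, hD⟩]
      · rw [if_neg hD, if_neg (fun hh => hD hh.2)]
    rw [e1, e2, zero_add]
  -- splitting maj u
  have hmaju : ∑ j ∈ Finset.range n, T u j
      = (∑ j ∈ Finset.range n, if j + 1 = (p : ℕ) then 0 else T u j)
        + ∑ j ∈ Finset.range n, (if j + 1 = (p : ℕ) then T u j else 0) := by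
    rw [← Finset.sum_add_distrib]
    refine Finset.sum_congr rfl fun j _ => ?_
    split_ifs <;> omega
  have hW : ∑ j ∈ Finset.range n, (if j + 1 = (p : ℕ) then T u j else 0)
      = if 1 ≤ (p : ℕ) then T u ((p : ℕ) - 1) else 0 := by
    by_cases hp1 : 1 ≤ (p : ℕ)
    · rw [if_pos hp1]
      have e : ∀ j ∈ Finset.range n, (if j + 1 = (p : ℕ) then T u j else 0)
          = (if j = (p : ℕ) - 1 then T u j else 0) := by
        intro j _
        congr 1
        simp only [eq_iff_iff]
        omega
      rw [Finset.sum_congr rfl e, Finset.sum_ite_eq' (Finset.range n) ((p : ℕ) - 1) (T u),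
        if_pos (Finset.mem_range.mpr (by omega))]
    · rw [if_neg hp1]
      refine Finset.sum_eq_zero fun j hj => if_neg (by omega)
  rw [h0, h2, hdge, hmaju, hW]
  -- final case analysis
  rcases eq_or_lt_of_le hp with hpn | hpn
  · -- p = n
    rw [T_ins_self, if_neg (show ¬((p : ℕ) < n) by omega)]
    unfold label
    rw [if_pos hpn]
    have hdn : dge u (p : ℕ) = 0 := by
      unfold dge dband
      rw [hpn, Finset.Ico_self, Finset.sum_empty]
    have hTn : (if 1 ≤ (p : ℕ) then T u ((p : ℕ) - 1) else 0) = 0 := by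
      split_ifs with h1
      · unfold T
        rw [if_neg]
        rintro ⟨hh, _⟩
        omega
      · rfl
    rw [hdn, hTn]
    omega
  · -- p < n
    rw [T_ins_self, if_pos hpn]
    unfold label
    rw [if_neg (show ¬((p : ℕ) = n) by omega)]
    by_cases hB : 1 ≤ (p : ℕ) ∧ IsDes u ((p : ℕ) - 1)
    · rw [if_pos hB, if_pos hB.1]
      have : T u ((p : ℕ) - 1) = (p : ℕ) := by
        unfold T
        rw [if_pos hB.2]
        omega
      rw [this]
      omega
    · rw [if_neg hB]
      have : (if 1 ≤ (p : ℕ) then T u ((p : ℕ) - 1) else 0) = 0 := by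
        split_ifs with h1
        · unfold T
          rw [if_neg]
          intro hD
          exact hB ⟨h1, hD⟩
        · rfl
      rw [this]
      omega


lemma label_le (u : Equiv.Perm (Fin n)) (p : Fin (n + 1)) : label u (p : ℕ) ≤ n := by
  have hp : (p : ℕ) ≤ n := by have := p.isLt; omega
  unfold label
  split_ifs with h1 h2
  · omega
  · have := dge_le u (p : ℕ) (by omega)
    omega
  · by_cases hpn : (p : ℕ) < n
    · have := dge_le u (p : ℕ) hpn
      omega
    · omega

lemma label_inj_aux (u : Equiv.Perm (Fin n)) {p q : Fin (n + 1)} (h : (p : ℕ) < (q : ℕ)) :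
    label u (p : ℕ) ≠ label u (q : ℕ) := by
  have hpn : (p : ℕ) ≤ n := by have := p.isLt; omega
  have hqn : (q : ℕ) ≤ n := by have := q.isLt; omega
  have hsplit : dge u (p : ℕ) = dband u (p : ℕ) (q : ℕ) + dge u (q : ℕ) :=
    dband_split u (by omega) hqn
  have hband : dband u (p : ℕ) (q : ℕ) ≤ (q : ℕ) - (p : ℕ) := dband_le u _ _
  have h0p : dge u 0 = dband u 0 (p : ℕ) + dge u (p : ℕ) := dge_zero_eq u _ hpn
  have h0q : dge u 0 = dband u 0 (q : ℕ) + dge u (q : ℕ) := dge_zero_eq u _ hqn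
  have hb0p : dband u 0 (p : ℕ) ≤ (p : ℕ) := by have := dband_le u 0 (p : ℕ); omega
  have hb0q : dband u 0 (q : ℕ) ≤ (q : ℕ) := by have := dband_le u 0 (q : ℕ); omega
  have hpne : (p : ℕ) ≠ n := by omega
  unfold label
  rw [if_neg hpne]
  by_cases hqe : (q : ℕ) = n
  · rw [if_pos hqe]
    split_ifs <;> omega
  · rw [if_neg hqe]
    by_cases hcp : 1 ≤ (p : ℕ) ∧ IsDes u ((p : ℕ) - 1) <;>
      by_cases hcq : 1 ≤ (q : ℕ) ∧ IsDes u ((q : ℕ) - 1)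
    · rw [if_pos hcp, if_pos hcq]
      have hpos : 1 ≤ dband u (p : ℕ) (q : ℕ) := dband_pos u h hcq.2
      omega
    · rw [if_pos hcp, if_neg hcq]
      have hpos : 1 ≤ dband u 0 (p : ℕ) := dband_pos u (by omega) hcp.2
      omega
    · rw [if_neg hcp, if_pos hcq]
      have hpos : 1 ≤ dband u 0 (q : ℕ) := dband_pos u (by omega) hcq.2
      omega
    · rw [if_neg hcp, if_neg hcq]
      have hDq : ¬ IsDes u ((q : ℕ) - 1) := fun hD => hcq ⟨by omega, hD⟩
      obtain ⟨r, hr⟩ : ∃ r, (q : ℕ) = r + 1 := ⟨(q : ℕ) - 1, by omega⟩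
      have hband2 : dband u (p : ℕ) (q : ℕ)
          = dband u (p : ℕ) r + dband u r (r + 1) := by
        rw [hr]; exact dband_split u (by omega) (by omega)
      have hz : dband u r (r + 1) = 0 := by
        rw [dband_single, if_neg]
        intro hD
        exact hDq (by rw [hr]; simpa using hD)
      have hple : dband u (p : ℕ) r ≤ r - (p : ℕ) := dband_le u _ _
      omega

lemma label_sum (u : Equiv.Perm (Fin n)) :
    ∑ p : Fin (n + 1), (X : Polynomial ℤ) ^ (label u (p : ℕ)) = qInt (n + 1) := by
  have hbij : Function.Bijective
      (fun p : Fin (n + 1) => (⟨label u (p : ℕ), by have := label_le u p; omega⟩ : Fin (n + 1))) := by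
    apply Finite.injective_iff_bijective.mp
    intro p q hpq
    simp only [Fin.mk.injEq] at hpq
    rcases lt_trichotomy ((p : ℕ)) ((q : ℕ)) with hc | hc | hc
    · exact absurd hpq (label_inj_aux u hc)
    · exact Fin.ext hc
    · exact absurd hpq.symm (label_inj_aux u hc)
  calc ∑ p : Fin (n + 1), (X : Polynomial ℤ) ^ (label u (p : ℕ))
      = ∑ k : Fin (n + 1), (X : Polynomial ℤ) ^ (k : ℕ) :=
        Fintype.sum_bijective _ hbij _ _ (fun p => rfl)
    _ = qInt (n + 1) := by rw [qInt]; exact Fin.sum_univ_eq_sum_range _ _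


def SmallInc (m : ℕ) {N : ℕ} (u : Equiv.Perm (Fin N)) : Prop :=
  ∀ a b : Fin N, (a : ℕ) < (b : ℕ) → (b : ℕ) < m → u⁻¹ a < u⁻¹ b

noncomputable def Dset (N m : ℕ) : Finset (Equiv.Perm (Fin N)) :=
  @Finset.filter _ (fun u => SmallInc m u) (Classical.decPred _) Finset.univ

lemma sum_C_eq_sum_D (n s : ℕ) :
    ∑ w ∈ CFinset n s, (X : Polynomial ℤ) ^ maj w⁻¹
      = ∑ u ∈ Dset n (n - s), (X : Polynomial ℤ) ^ maj u := by
  refine Finset.sum_nbij' (i := fun w => w⁻¹) (j := fun u => u⁻¹) ?_ ?_ ?_ ?_ ?_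
  · intro w hw
    simp only [CFinset, Finset.mem_filter] at hw
    simp only [Dset, Finset.mem_filter, Finset.mem_univ, true_and]
    intro a b hab hbm
    simpa using hw.2 a b hab hbm
  · intro u hu
    simp only [Dset, Finset.mem_filter, Finset.mem_univ, true_and] at hu
    simp only [CFinset, Finset.mem_filter, Finset.mem_univ, true_and]
    intro i j hij hjm
    simpa using hu i j hij hjm
  · intro w _; simp
  · intro u _; simp
  · intro w _; rfl

lemma ins_mem {m : ℕ} (hm : m ≤ n) (u : Equiv.Perm (Fin n)) (p : Fin (n + 1)) :
    ins u p ∈ Dset (n + 1) m ↔ u ∈ Dset n m := by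
  simp only [Dset, Finset.mem_filter, Finset.mem_univ, true_and]
  unfold SmallInc
  constructor
  · intro H a b hab hbm
    have := H (Fin.castSucc a) (Fin.castSucc b) (by simpa using hab) (by simpa using hbm)
    rw [ins_inv_castSucc, ins_inv_castSucc] at this
    exact Fin.succAbove_lt_succAbove_iff.mp this
  · intro H a b hab hbm
    have han : (a : ℕ) < n := by omega
    have hbn : (b : ℕ) < n := by omega
    have ha : a = Fin.castSucc ⟨(a : ℕ), han⟩ := by apply Fin.ext; simp
    have hb : b = Fin.castSucc ⟨(b : ℕ), hbn⟩ := by apply Fin.ext; simp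
    rw [ha, hb, ins_inv_castSucc, ins_inv_castSucc]
    exact Fin.succAbove_lt_succAbove_iff.mpr
      (H ⟨(a : ℕ), han⟩ ⟨(b : ℕ), hbn⟩ (by simpa using hab) (by simpa using hbm))

lemma step (n m : ℕ) (hm : m ≤ n) :
    ∑ v ∈ Dset (n + 1) m, (X : Polynomial ℤ) ^ maj v
      = qInt (n + 1) * ∑ u ∈ Dset n m, (X : Polynomial ℤ) ^ maj u := by
  have key : ∑ w ∈ (Dset n m) ×ˢ (Finset.univ : Finset (Fin (n + 1))),
        (X : Polynomial ℤ) ^ maj (ins w.1 w.2)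
      = ∑ v ∈ Dset (n + 1) m, (X : Polynomial ℤ) ^ maj v := by
    refine Finset.sum_bij (fun w _ => ins w.1 w.2) ?_ ?_ ?_ ?_
    · intro w hw
      rw [Finset.mem_product] at hw
      exact (ins_mem hm w.1 w.2).mpr hw.1
    · intro a ha b hb hab
      have hab' : ins a.1 a.2 = ins b.1 b.2 := hab
      have hp : a.2 = b.2 := by
        have := congrArg (fun e => e⁻¹ (Fin.last n)) hab'
        simpa [ins_inv_last] using this
      have hu : a.1 = b.1 := by
        apply Equiv.ext
        intro k
        have h1 : Fin.castSucc (a.1 k) = Fin.castSucc (b.1 k) := by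
          rw [← ins_apply_succAbove a.1 a.2 k, hab', hp, ins_apply_succAbove]
        exact Fin.castSucc_injective n h1
      exact Prod.ext hu hp
    · intro v hv
      set p := v⁻¹ (Fin.last n) with hpdef
      have hvp : v p = Fin.last n := Equiv.apply_symm_apply v _
      set E := ((finSuccEquiv' p).symm.trans (v : Equiv.Perm (Fin (n+1)))).trans
        finSuccEquivLast with hEdef
      set u := Equiv.removeNone E with hudef
      have hins : ins u p = v := by
        apply Equiv.ext
        intro i
        by_cases hip : i = p
        · rw [hip, ins_apply_self, hvp]
        · obtain ⟨k, hk⟩ := Fin.exists_succAbove_eq hip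
          rw [← hk, ins_apply_succAbove]
          have h1 : E (some k) = finSuccEquivLast (v (p.succAbove k)) := by
            simp [hEdef, Equiv.trans_apply]
          have hne : v (p.succAbove k) ≠ Fin.last n := by
            rw [← hvp]
            intro hcon
            exact Fin.succAbove_ne p k (v.injective hcon)
          obtain ⟨y, hy⟩ := Fin.exists_castSucc_eq.mpr hne
          have h2 : E (some k) = some y := by rw [h1, ← hy, finSuccEquivLast_castSucc]
          have h3 : some (u k) = E (some k) := Equiv.removeNone_some E ⟨y, h2⟩
          rw [h2] at h3
          have huk : u k = y := by injection h3
          rw [huk, hy]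
      refine ⟨(u, p), ?_, hins⟩
      rw [Finset.mem_product]
      exact ⟨(ins_mem hm u p).mp (by rw [hins]; exact hv), Finset.mem_univ _⟩
    · intro a ha; rfl
  rw [← key, Finset.sum_product]
  have inner : ∀ u ∈ Dset n m, ∑ p : Fin (n + 1), (X : Polynomial ℤ) ^ maj (ins u p)
      = (X : Polynomial ℤ) ^ maj u * qInt (n + 1) := by
    intro u _
    calc ∑ p : Fin (n + 1), (X : Polynomial ℤ) ^ maj (ins u p)
        = ∑ p : Fin (n + 1), (X : Polynomial ℤ) ^ maj u * (X : Polynomial ℤ) ^ label u (p : ℕ) := by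
          refine Finset.sum_congr rfl fun p _ => ?_
          rw [maj_ins, pow_add]
      _ = (X : Polynomial ℤ) ^ maj u * ∑ p : Fin (n + 1), (X : Polynomial ℤ) ^ label u (p : ℕ) := by
          rw [Finset.mul_sum]
      _ = (X : Polynomial ℤ) ^ maj u * qInt (n + 1) := by rw [label_sum]
  rw [Finset.sum_congr rfl inner, ← Finset.sum_mul, mul_comm]

lemma Dset_self (N : ℕ) : Dset N N = {1} := by
  ext u
  simp only [Dset, Finset.mem_filter, Finset.mem_univ, true_and, Finset.mem_singleton]
  constructor
  · intro H
    have hmono : StrictMono (fun x : Fin N => u⁻¹ x) := fun a b hab =>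
      H a b hab b.isLt
    have hrange : Set.range (fun x : Fin N => u⁻¹ x) = Set.range (id : Fin N → Fin N) := by
      rw [Set.range_id]
      exact Set.range_eq_univ.mpr (Equiv.surjective _)
    haveI : WellFoundedLT (Fin N) := inferInstance
    have hfun : (fun x : Fin N => u⁻¹ x) = id := (hmono.range_inj strictMono_id).mp hrange
    have hinv : u⁻¹ = 1 := Equiv.ext fun x => congrFun hfun x
    exact inv_eq_one.mp hinv
  · rintro rfl
    intro a b hab _
    simp only [inv_one, Equiv.Perm.one_apply]
    exact hab

lemma maj_one (N : ℕ) : maj (1 : Equiv.Perm (Fin N)) = 0 := by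
  refine Finset.sum_eq_zero fun i _ => ?_
  by_cases h : i + 1 < N
  · rw [dif_pos h, if_neg]
    simp [Fin.lt_def]
  · rw [dif_neg h]

lemma main (n m : ℕ) (h : m ≤ n) :
    ∑ u ∈ Dset n m, (X : Polynomial ℤ) ^ maj u
      = ∏ j ∈ Finset.range (n - m), qInt (n - j) := by
  induction n with
  | zero =>
    have hm0 : m = 0 := by omega
    subst hm0
    rw [Dset_self, Finset.sum_singleton, maj_one]
    simp
  | succ n ih =>
    rcases eq_or_lt_of_le h with he | hlt
    · rw [← he, Dset_self, Finset.sum_singleton, maj_one]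
      rw [Nat.sub_self]
      simp
    · have hm : m ≤ n := by omega
      rw [step n m hm, ih hm]
      have hidx : n + 1 - m = (n - m) + 1 := by omega
      rw [hidx, Finset.prod_range_succ']
      have hcong : ∀ j ∈ Finset.range (n - m), qInt (n + 1 - (j + 1)) = qInt (n - j) :=
        fun j _ => by congr 1; omega
      rw [Finset.prod_congr rfl hcong, Nat.sub_zero, mul_comm]

end CMajQ


/-- For `s ≤ n`, the sum over `C_{n,s}` of `q^{maj(w⁻¹)}` equals
`[n]_q [n-1]_q ⋯ [n-s+1]_q`. -/
theorem c_maj_q (n s : ℕ) (h : s ≤ n) :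
    ∑ w ∈ CFinset n s, (X : Polynomial ℤ) ^ maj w⁻¹ =
      ∏ j ∈ Finset.range s, qInt (n - j) := by

  rw [CMajQ.sum_C_eq_sum_D n s, CMajQ.main n (n - s) (Nat.sub_le _ _), Nat.sub_sub_self h]
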